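/- Let Σ = {a < b < c} and suppose w = xαβyβα and w' = xβαyαβ for some distinct letters α, β ∈ Σ and words x, y ∈ Σ*. If x and y have the same Parikh vector, i.e., |x|_a = |y|_a, |x|_b = |y|_b and |x|_c = |y|_c, then the circular words [w] and [w'] are M-equivalent: Ψ_Σ([w]) = Ψ_Σ([w']). -/

import Mathlib

/-- The number of occurrences of `v` as a scattered subword (subsequence) of `w`:
the number of strictly increasing sequences of positions in `w` spelling out `v`. -/
def subwordCount {α : Type*} [DecidableEq α] (w v : List α) : ℕ :=
  w.sublists.count v

/-- The conjugacy class (circular word) `[w]` of `w`: the set of all cyclic shifts of `w`. -/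
def conjClass {α : Type*} [DecidableEq α] (w : List α) : Finset (List α) :=
  insert w ((Finset.range w.length).image w.rotate)

/-- The average subword count of `v` in the circular word `[w]`:
`|[w]|_v = (1/|[w]|) ∑_{u ∈ [w]} |u|_v`. -/
def circCount {α : Type*} [DecidableEq α] (w v : List α) : ℚ :=
  (∑ u ∈ conjClass w, (subwordCount u v : ℚ)) / ((conjClass w).card : ℚ)

/-- The Parikh matrix of the letter `q` of the ordered alphabet `Fin s`:
the identity matrix with an extra `1` in entry `(q, q+1)`. -/
def parikhLetter {s : ℕ} (q : Fin s) : Matrix (Fin (s + 1)) (Fin (s + 1)) ℚ :=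
  1 + Matrix.single q.castSucc q.succ 1

/-- The Parikh matrix mapping over the ordered alphabet `Fin s` (a monoid morphism). -/
def parikhMatrix {s : ℕ} (w : List (Fin s)) : Matrix (Fin (s + 1)) (Fin (s + 1)) ℚ :=
  (w.map parikhLetter).prod

/-- The Parikh matrix of the circular word `[w]`:
`Ψ([w]) = (1/|[w]|) ∑_{u ∈ [w]} Ψ(u)`. -/
def circParikh {s : ℕ} (w : List (Fin s)) : Matrix (Fin (s + 1)) (Fin (s + 1)) ℚ :=
  (((conjClass w).card : ℚ))⁻¹ • ∑ u ∈ conjClass w, parikhMatrix u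

/-- The alternate matrix: `(i,j)` entry is `(-1)^(i+j)` times the `(i,j)` entry of `A`. -/
def altMatrix {n : ℕ} (A : Matrix (Fin n) (Fin n) ℚ) : Matrix (Fin n) (Fin n) ℚ :=
  Matrix.of fun i j => (-1 : ℚ) ^ (i.val + j.val) * A i j

/-- The word `a_i a_{i+1} ⋯ a_j` over the ordered alphabet `Fin s`. -/
def segWord {s : ℕ} (i j : Fin s) : List (Fin s) :=
  (List.range (j.val - i.val + 1)).attach.map fun t =>
    ⟨i.val + t.1, by
      have ht := List.mem_range.mp t.2
      have hi := i.isLt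
      have hj := j.isLt
      omega⟩

/-! ### Auxiliary material -/

set_option linter.unreachableTactic false
set_option linter.unusedTactic false
set_option linter.unnecessarySeqFocus false
set_option linter.unusedVariables false

section Aux

theorem parikhMatrix_cons {s : ℕ} (a : Fin s) (u : List (Fin s)) :
    parikhMatrix (a :: u) = parikhLetter a * parikhMatrix u := by
  simp [parikhMatrix]

theorem parikhMatrix_append {s : ℕ} (u v : List (Fin s)) :
    parikhMatrix (u ++ v) = parikhMatrix u * parikhMatrix v := by
  simp [parikhMatrix]

theorem parikhMatrix_single {s : ℕ} (a : Fin s) : parikhMatrix [a] = parikhLetter a := by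
  simp [parikhMatrix]

theorem parikhMatrix_pair {s : ℕ} (a b : Fin s) :
    parikhMatrix [a, b] = parikhLetter a * parikhLetter b := by
  simp [parikhMatrix]

theorem mul_fin_four {R : Type*} [CommRing R]
    (a11 a12 a13 a14 a21 a22 a23 a24 a31 a32 a33 a34 a41 a42 a43 a44
     b11 b12 b13 b14 b21 b22 b23 b24 b31 b32 b33 b34 b41 b42 b43 b44 : R) :
    !![a11,a12,a13,a14; a21,a22,a23,a24; a31,a32,a33,a34; a41,a42,a43,a44] *
    !![b11,b12,b13,b14; b21,b22,b23,b24; b31,b32,b33,b34; b41,b42,b43,b44] =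
    !![a11*b11+a12*b21+a13*b31+a14*b41, a11*b12+a12*b22+a13*b32+a14*b42, a11*b13+a12*b23+a13*b33+a14*b43, a11*b14+a12*b24+a13*b34+a14*b44;
       a21*b11+a22*b21+a23*b31+a24*b41, a21*b12+a22*b22+a23*b32+a24*b42, a21*b13+a22*b23+a23*b33+a24*b43, a21*b14+a22*b24+a23*b34+a24*b44;
       a31*b11+a32*b21+a33*b31+a34*b41, a31*b12+a32*b22+a33*b32+a34*b42, a31*b13+a32*b23+a33*b33+a34*b43, a31*b14+a32*b24+a33*b34+a34*b44;
       a41*b11+a42*b21+a43*b31+a44*b41, a41*b12+a42*b22+a43*b32+a44*b42, a41*b13+a42*b23+a43*b33+a44*b43, a41*b14+a42*b24+a43*b34+a44*b44] := by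
  ext i j
  fin_cases i <;> fin_cases j <;>
    simp [Matrix.mul_apply, Fin.sum_univ_four]

theorem parikhLetter_zero : parikhLetter (0 : Fin 3) = !![1,1,0,0;0,1,0,0;0,0,1,0;0,0,0,1] := by
  ext i j
  fin_cases i <;> fin_cases j <;>
    simp [parikhLetter, Matrix.single, Matrix.one_apply, Matrix.vecHead, Matrix.vecTail] <;>
    decide

theorem parikhLetter_one : parikhLetter (1 : Fin 3) = !![1,0,0,0;0,1,1,0;0,0,1,0;0,0,0,1] := by
  ext i j
  fin_cases i <;> fin_cases j <;>
    simp [parikhLetter, Matrix.single, Matrix.one_apply, Matrix.vecHead, Matrix.vecTail] <;>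
    decide

theorem parikhLetter_two : parikhLetter (2 : Fin 3) = !![1,0,0,0;0,1,0,0;0,0,1,1;0,0,0,1] := by
  ext i j
  fin_cases i <;> fin_cases j <;>
    simp [parikhLetter, Matrix.single, Matrix.one_apply, Matrix.vecHead, Matrix.vecTail] <;>
    decide

theorem fin3_cases (a : Fin 3) : a = 0 ∨ a = 1 ∨ a = 2 := by revert a; decide

theorem one_fin_four : (1 : Matrix (Fin 4) (Fin 4) ℚ) = !![1,0,0,0;0,1,0,0;0,0,1,0;0,0,0,1] := by
  ext i j
  fin_cases i <;> fin_cases j <;>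
    simp [Matrix.one_apply, Matrix.vecHead, Matrix.vecTail]

/-- unitriangular form of a Parikh matrix over `Fin 3`. -/
theorem parikhMatrix_form (u : List (Fin 3)) : ∃ p q r : ℚ,
    parikhMatrix u = !![1, (u.count 0 : ℚ), p, r;
                        0, 1, (u.count 1 : ℚ), q;
                        0, 0, 1, (u.count 2 : ℚ);
                        0, 0, 0, 1] := by
  induction u with
  | nil =>
      refine ⟨0, 0, 0, ?_⟩
      show (1 : Matrix (Fin 4) (Fin 4) ℚ) = _
      rw [one_fin_four]
      norm_num
  | cons a u ih =>
      obtain ⟨p, q, r, hu⟩ := ih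
      rw [parikhMatrix_cons, hu]
      rcases fin3_cases a with h | h | h <;> subst h
      · exact ⟨p + (u.count 1 : ℚ), q, r + q, by
          rw [parikhLetter_zero, mul_fin_four]
          ext i j
          fin_cases i <;> fin_cases j <;>
            simp [List.count_cons, Matrix.vecHead, Matrix.vecTail] <;> push_cast <;> ring⟩
      · exact ⟨p, q + (u.count 2 : ℚ), r, by
          rw [parikhLetter_one, mul_fin_four]
          ext i j
          fin_cases i <;> fin_cases j <;>
            simp [List.count_cons, Matrix.vecHead, Matrix.vecTail] <;> push_cast <;> ring⟩
      · exact ⟨p, q, r, by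
          rw [parikhLetter_two, mul_fin_four]
          ext i j
          fin_cases i <;> fin_cases j <;>
            simp [List.count_cons, Matrix.vecHead, Matrix.vecTail] <;> push_cast <;> ring⟩

/-- the matrix `E₀₃`. -/
def e03 : Matrix (Fin 4) (Fin 4) ℚ := Matrix.single 0 3 1

theorem e03_lit : e03 = !![0,0,0,1;0,0,0,0;0,0,0,0;0,0,0,0] := by
  ext i j
  fin_cases i <;> fin_cases j <;>
    simp [e03, Matrix.single, Matrix.vecHead, Matrix.vecTail] <;> decide

theorem pm_mul_e03 (u : List (Fin 3)) : parikhMatrix u * e03 = e03 := by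
  obtain ⟨p, q, r, hu⟩ := parikhMatrix_form u
  rw [hu, e03_lit, mul_fin_four]
  norm_num

theorem e03_mul_pm (u : List (Fin 3)) : e03 * parikhMatrix u = e03 := by
  obtain ⟨p, q, r, hu⟩ := parikhMatrix_form u
  rw [hu, e03_lit, mul_fin_four]
  norm_num

/-- `Fm u X = ∑ over the |u| cuts u = t ++ s (t a proper prefix) of M(s) * X * M(t)`. -/
def Fm {s : ℕ} (u : List (Fin s)) (X : Matrix (Fin (s+1)) (Fin (s+1)) ℚ) :
    Matrix (Fin (s+1)) (Fin (s+1)) ℚ :=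
  ∑ i ∈ Finset.range u.length, parikhMatrix (u.drop i) * X * parikhMatrix (u.take i)

theorem Fm_nil {s : ℕ} (X : Matrix (Fin (s+1)) (Fin (s+1)) ℚ) : Fm [] X = 0 := by
  simp [Fm]

theorem Fm_single {s : ℕ} (γ : Fin s) (X : Matrix (Fin (s+1)) (Fin (s+1)) ℚ) :
    Fm [γ] X = parikhLetter γ * X := by
  simp [Fm, parikhMatrix]

theorem Fm_append {s : ℕ} (u v : List (Fin s)) (X : Matrix (Fin (s+1)) (Fin (s+1)) ℚ) :
    Fm (u ++ v) X = Fm u (parikhMatrix v * X) + Fm v (X * parikhMatrix u) := by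
  unfold Fm
  rw [List.length_append, Finset.sum_range_add]
  congr 1
  · refine Finset.sum_congr rfl fun i hi => ?_
    have hi' : i ≤ u.length := le_of_lt (Finset.mem_range.mp hi)
    rw [List.drop_append_of_le_length hi', List.take_append_of_le_length hi',
      parikhMatrix_append]
    noncomm_ring
  · refine Finset.sum_congr rfl fun i _ => ?_
    rw [List.drop_length_add_append, List.take_length_add_append, parikhMatrix_append]
    noncomm_ring

theorem Fm_pair {s : ℕ} (γ δ : Fin s) (X : Matrix (Fin (s+1)) (Fin (s+1)) ℚ) :
    Fm [γ, δ] X = parikhLetter γ * (parikhLetter δ * X) + parikhLetter δ * (X * parikhLetter γ) := by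
  show Fm ([γ] ++ [δ]) X = _
  rw [Fm_append, Fm_single, Fm_single]
  simp [parikhMatrix_single]

theorem Fm_add {s : ℕ} (u : List (Fin s)) (X Y : Matrix (Fin (s+1)) (Fin (s+1)) ℚ) :
    Fm u (X + Y) = Fm u X + Fm u Y := by
  simp [Fm, Matrix.mul_add, Matrix.add_mul, Finset.sum_add_distrib]

theorem Fm_smul {s : ℕ} (u : List (Fin s)) (c : ℚ) (X : Matrix (Fin (s+1)) (Fin (s+1)) ℚ) :
    Fm u (c • X) = c • Fm u X := by
  simp [Fm, Matrix.mul_smul, Matrix.smul_mul, Finset.smul_sum]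

theorem Fm_sub {s : ℕ} (u : List (Fin s)) (X Y : Matrix (Fin (s+1)) (Fin (s+1)) ℚ) :
    Fm u (X - Y) = Fm u X - Fm u Y := by
  simp [Fm, Matrix.mul_sub, Matrix.sub_mul, Finset.sum_sub_distrib]

theorem Fm_e03 (u : List (Fin 3)) : Fm u e03 = (u.length : ℚ) • e03 := by
  unfold Fm
  have hterm : ∀ i ∈ Finset.range u.length,
      parikhMatrix (u.drop i) * e03 * parikhMatrix (u.take i) = e03 := by
    intro i _
    rw [pm_mul_e03, e03_mul_pm]
  rw [Finset.sum_congr rfl hterm, Finset.sum_const, Finset.card_range, Nat.cast_smul_eq_nsmul]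

end Aux

section Core

set_option maxHeartbeats 3200000 in
/-- The core matrix computation. -/
theorem core (α β : Fin 3) (hαβ : α ≠ β) (a b c p q r p' q' r' : ℚ)
    (X Y : Matrix (Fin 4) (Fin 4) ℚ)
    (hX : X = !![1,a,p,r;0,1,b,q;0,0,1,c;0,0,0,1])
    (hY : Y = !![1,a,p',r';0,1,b,q';0,0,1,c;0,0,0,1]) :
    ∃ ζ : ℚ,
      parikhLetter α * (parikhLetter β * (Y * (parikhLetter β * parikhLetter α))) =
        parikhLetter β * (parikhLetter α * (Y * (parikhLetter α * parikhLetter β))) + ζ • e03 ∧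
      parikhLetter β * (parikhLetter α * (X * (parikhLetter α * parikhLetter β))) =
        parikhLetter α * (parikhLetter β * (X * (parikhLetter β * parikhLetter α))) - ζ • e03 ∧
      parikhLetter α * (parikhLetter β * (Y * (parikhLetter β * (parikhLetter α * X)))) =
        parikhLetter β * (parikhLetter α * (Y * (parikhLetter α * (parikhLetter β * X)))) + ζ • e03 ∧
      parikhLetter β * (parikhLetter α * (X * (parikhLetter α * (parikhLetter β * Y)))) =
        parikhLetter α * (parikhLetter β * (X * (parikhLetter β * (parikhLetter α * Y)))) - ζ • e03 ∧
      parikhLetter β * (Y * (parikhLetter β * (parikhLetter α * (X * parikhLetter α)))) =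
        parikhLetter α * (Y * (parikhLetter α * (parikhLetter β * (X * parikhLetter β)))) +
        parikhLetter β * (X * (parikhLetter β * (parikhLetter α * (Y * parikhLetter α)))) -
        parikhLetter α * (X * (parikhLetter α * (parikhLetter β * (Y * parikhLetter β)))) := by
  subst hX hY
  rcases fin3_cases α with rfl | rfl | rfl <;> rcases fin3_cases β with rfl | rfl | rfl
  · exact absurd rfl hαβ
  · -- α = 0, β = 1, ζ = c
    refine ⟨c, ?_, ?_, ?_, ?_, ?_⟩ <;>
      (norm_num [parikhLetter_zero, parikhLetter_one, mul_fin_four];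
       first | (ext i j; fin_cases i <;> fin_cases j <;> simp [e03, Matrix.single, Matrix.vecHead, Matrix.vecTail] <;> ring) | ((repeat' apply And.intro) <;> first | exact Subsingleton.elim _ _ | ring))
  · -- α = 0, β = 2, ζ = 0
    refine ⟨0, ?_, ?_, ?_, ?_, ?_⟩ <;>
      (norm_num [parikhLetter_zero, parikhLetter_two, mul_fin_four];
       try (first | (ext i j; fin_cases i <;> fin_cases j <;> simp [e03, Matrix.single, Matrix.vecHead, Matrix.vecTail] <;> ring) | ((repeat' apply And.intro) <;> first | exact Subsingleton.elim _ _ | ring)))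
  · -- α = 1, β = 0, ζ = -c
    refine ⟨-c, ?_, ?_, ?_, ?_, ?_⟩ <;>
      (norm_num [parikhLetter_zero, parikhLetter_one, mul_fin_four];
       first | (ext i j; fin_cases i <;> fin_cases j <;> simp [e03, Matrix.single, Matrix.vecHead, Matrix.vecTail] <;> ring) | ((repeat' apply And.intro) <;> first | exact Subsingleton.elim _ _ | ring))
  · exact absurd rfl hαβ
  · -- α = 1, β = 2, ζ = -a
    refine ⟨-a, ?_, ?_, ?_, ?_, ?_⟩ <;>
      (norm_num [parikhLetter_one, parikhLetter_two, mul_fin_four];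
       first | (ext i j; fin_cases i <;> fin_cases j <;> simp [e03, Matrix.single, Matrix.vecHead, Matrix.vecTail] <;> ring) | ((repeat' apply And.intro) <;> first | exact Subsingleton.elim _ _ | ring))
  · -- α = 2, β = 0, ζ = 0
    refine ⟨0, ?_, ?_, ?_, ?_, ?_⟩ <;>
      (norm_num [parikhLetter_zero, parikhLetter_two, mul_fin_four];
       try (first | (ext i j; fin_cases i <;> fin_cases j <;> simp [e03, Matrix.single, Matrix.vecHead, Matrix.vecTail] <;> ring) | ((repeat' apply And.intro) <;> first | exact Subsingleton.elim _ _ | ring)))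
  · -- α = 2, β = 1, ζ = a
    refine ⟨a, ?_, ?_, ?_, ?_, ?_⟩ <;>
      (norm_num [parikhLetter_one, parikhLetter_two, mul_fin_four];
       first | (ext i j; fin_cases i <;> fin_cases j <;> simp [e03, Matrix.single, Matrix.vecHead, Matrix.vecTail] <;> ring) | ((repeat' apply And.intro) <;> first | exact Subsingleton.elim _ _ | ring))
  · exact absurd rfl hαβ

end Core

section Avg

theorem conjClass_eq_image {α : Type*} [DecidableEq α] (w : List α) (hw : w ≠ []) :
    conjClass w = (Finset.range w.length).image w.rotate := by
  rw [conjClass, Finset.insert_eq_self]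
  exact Finset.mem_image.mpr ⟨0, Finset.mem_range.mpr (List.length_pos_iff.mpr hw), by simp⟩

theorem fiber_card_eq {α : Type*} [DecidableEq α] (w : List α) (k : ℕ) (hk : k < w.length) :
    ((Finset.range w.length).filter (fun i => w.rotate i = w.rotate k)).card =
    ((Finset.range w.length).filter (fun i => w.rotate i = w)).card := by
  have hn0 : 0 < w.length := lt_of_le_of_lt (Nat.zero_le _) hk
  apply Finset.card_bij' (fun i _ => (i + (w.length - k)) % w.length)
    (fun j _ => (j + k) % w.length)
  · intro i hi
    simp only [Finset.mem_filter, Finset.mem_range] at hi ⊢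
    refine ⟨Nat.mod_lt _ hn0, ?_⟩
    rw [List.rotate_mod, ← List.rotate_rotate, hi.2, List.rotate_rotate]
    have h : k + (w.length - k) = w.length := by omega
    rw [h, List.rotate_length]
  · intro j hj
    simp only [Finset.mem_filter, Finset.mem_range] at hj ⊢
    refine ⟨Nat.mod_lt _ hn0, ?_⟩
    rw [List.rotate_mod, ← List.rotate_rotate, hj.2]
  · intro i hi
    simp only [Finset.mem_filter, Finset.mem_range] at hi
    rw [Nat.mod_add_mod]
    have h : i + (w.length - k) + k = i + w.length := by omega
    rw [h, Nat.add_mod_right, Nat.mod_eq_of_lt hi.1]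
  · intro j hj
    simp only [Finset.mem_filter, Finset.mem_range] at hj
    rw [Nat.mod_add_mod]
    have h : j + k + (w.length - k) = j + w.length := by omega
    rw [h, Nat.add_mod_right, Nat.mod_eq_of_lt hj.1]

theorem circParikh_eq_rotAvg {s : ℕ} (w : List (Fin s)) (hw : w ≠ []) :
    circParikh w = ((w.length : ℚ))⁻¹ •
      ∑ i ∈ Finset.range w.length, parikhMatrix (w.rotate i) := by
  classical
  set n := w.length with hn
  have hn0 : 0 < n := List.length_pos_iff.mpr hw
  set t := conjClass w with ht
  have htimg : t = (Finset.range n).image w.rotate := conjClass_eq_image w hw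
  set m := ((Finset.range n).filter (fun i => w.rotate i = w)).card with hm
  have hmaps : ∀ i ∈ Finset.range n, w.rotate i ∈ t := by
    intro i hi
    rw [htimg]
    exact Finset.mem_image_of_mem _ hi
  have hfib : ∀ u ∈ t, ((Finset.range n).filter (fun i => w.rotate i = u)).card = m := by
    intro u hu
    rw [htimg] at hu
    obtain ⟨k, hk, rfl⟩ := Finset.mem_image.mp hu
    exact fiber_card_eq w k (Finset.mem_range.mp hk)
  have hcard : n = t.card * m := by
    have h2 := Finset.card_eq_sum_card_fiberwise hmaps
    rw [Finset.card_range] at h2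
    rw [h2, Finset.sum_congr rfl hfib, Finset.sum_const, smul_eq_mul]
  have hm0 : m ≠ 0 := by
    intro h0
    rw [h0, mul_zero] at hcard
    omega
  have hsum : ∑ i ∈ Finset.range n, parikhMatrix (w.rotate i)
      = m • ∑ u ∈ t, parikhMatrix u := by
    rw [← Finset.sum_fiberwise_of_maps_to hmaps (fun i => parikhMatrix (w.rotate i)),
      Finset.smul_sum]
    refine Finset.sum_congr rfl fun u hu => ?_
    have hconst : ∀ i ∈ (Finset.range n).filter (fun i => w.rotate i = u),
        parikhMatrix (w.rotate i) = parikhMatrix u := by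
      intro i hi
      rw [(Finset.mem_filter.mp hi).2]
    rw [Finset.sum_congr rfl hconst, Finset.sum_const, hfib u hu]
  rw [circParikh, hsum, ← Nat.cast_smul_eq_nsmul ℚ, smul_smul, ← ht]
  congr 1
  have hQ : (n : ℚ) = (t.card : ℚ) * (m : ℚ) := by exact_mod_cast hcard
  have hmQ : (m : ℚ) ≠ 0 := Nat.cast_ne_zero.mpr hm0
  rw [hQ, mul_inv, mul_assoc, inv_mul_cancel₀ hmQ, mul_one]

theorem rotSum_eq_Fm {s : ℕ} (w : List (Fin s)) :
    ∑ i ∈ Finset.range w.length, parikhMatrix (w.rotate i) = Fm w 1 := by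
  refine Finset.sum_congr rfl fun i hi => ?_
  rw [List.rotate_eq_drop_append_take (le_of_lt (Finset.mem_range.mp hi)),
    parikhMatrix_append, Matrix.mul_one]

theorem len3 (u : List (Fin 3)) : u.length = u.count 0 + u.count 1 + u.count 2 := by
  induction u with
  | nil => simp
  | cons a u ih =>
      rcases fin3_cases a with rfl | rfl | rfl <;> simp [List.count_cons, ih] <;> omega

end Avg

set_option maxHeartbeats 1600000 in
/-- Corollary 36: over `{a < b < c} = Fin 3`, if `w = xαβyβα` and `w' = xβαyαβ` for distinct
letters `α, β` and words `x, y` with the same Parikh vector, then `[w] ≡_M [w']`. -/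
theorem stmt_19 (α β : Fin 3) (hαβ : α ≠ β) (x y : List (Fin 3))
    (h : ∀ γ : Fin 3, x.count γ = y.count γ) :
    circParikh (x ++ [α, β] ++ y ++ [β, α]) = circParikh (x ++ [β, α] ++ y ++ [α, β]) := by
  have hw : (x ++ [α, β] ++ y ++ [β, α]) ≠ [] := by simp
  have hw' : (x ++ [β, α] ++ y ++ [α, β]) ≠ [] := by simp
  rw [circParikh_eq_rotAvg _ hw, circParikh_eq_rotAvg _ hw', rotSum_eq_Fm, rotSum_eq_Fm]
  have hlen : (x ++ [α, β] ++ y ++ [β, α]).length = (x ++ [β, α] ++ y ++ [α, β]).length := by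
    simp
  rw [hlen]
  congr 1
  -- main identity
  obtain ⟨p, q, r, hX⟩ := parikhMatrix_form x
  obtain ⟨p', q', r', hY0⟩ := parikhMatrix_form y
  have hY : parikhMatrix y =
      !![1, (x.count 0 : ℚ), p', r'; 0, 1, (x.count 1 : ℚ), q';
         0, 0, 1, (x.count 2 : ℚ); 0, 0, 0, 1] := by
    rw [hY0, h 0, h 1, h 2]
  obtain ⟨ζ, c1, c2, c3, c4, c5⟩ := core α β hαβ _ _ _ p q r p' q' r' _ _ hX hY
  have hlq : ((x.length : ℚ)) = ((y.length : ℚ)) := by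
    have : x.length = y.length := by rw [len3 x, len3 y, h 0, h 1, h 2]
    exact_mod_cast this
  simp only [Fm_append, Fm_pair, parikhMatrix_append, parikhMatrix_pair, one_mul,
    Matrix.one_mul, Matrix.mul_one, mul_one, mul_assoc]
  rw [c1, c2, c3, c4, c5]
  simp only [Fm_add, Fm_sub, Fm_smul, Fm_e03]
  rw [hlq]
  abel
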